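/- Let J be the 1D discrete Schrödinger operator (Ju)(n) = u(n−1) + d(n)u(n) + u(n+1) on ℓ²(ℤ) with bounded d : ℤ → ℂ. Suppose Im(d(n)) alternates between two distinct values b₁ ≠ b₂, i.e. Im(d(n)) = b₁ for even n and Im(d(n)) = b₂ for odd n. Then J has no eigenvalue lying on the boundary of its numerical range. -/

import Mathlib

open scoped InnerProductSpace
open scoped ENNReal ComplexConjugate

/-- The action of the 1D discrete Schrödinger operator
`(J u)(n) = u(n−1) + d(n) u(n) + u(n+1)`. -/
noncomputable def Jact1 (d : ℤ → ℂ) (u : ℤ → ℂ) (n : ℤ) : ℂ :=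
  u (n - 1) + d n * u n + u (n + 1)

/-- The numerical range of the 1D operator `J`. -/
noncomputable def numRangeJ1 (d : ℤ → ℂ) : Set ℂ :=
  {z | ∃ u v : lp (fun _ : ℤ => ℂ) 2, ‖u‖ = 1 ∧
    (∀ n, v n = Jact1 d (fun m => u m) n) ∧ ⟪u, v⟫_ℂ = z}

namespace Stmt14Aux

abbrev H : Type := lp (fun _ : ℤ => ℂ) 2

lemma ht2 : (0:ℝ) < (2:ℝ≥0∞).toReal := by norm_num

lemma summable_of_mem (u : H) : Summable (fun n : ℤ => ‖u n‖ ^ (2:ℝ≥0∞).toReal) :=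
  (memℓp_gen_iff ht2).1 (lp.memℓp u)

lemma mem_shift (u : H) (k : ℤ) : Memℓp (fun n : ℤ => u (n + k)) 2 := by
  apply memℓp_gen
  have h := ((Equiv.addRight k).summable_iff
    (f := fun n : ℤ => ‖u n‖ ^ (2:ℝ≥0∞).toReal)).2 (summable_of_mem u)
  exact h

lemma mem_mul (d : ℤ → ℂ) {C : ℝ} (hd : ∀ n, ‖d n‖ ≤ C) (u : H) :
    Memℓp (fun n : ℤ => d n * u n) 2 := by
  apply memℓp_gen
  refine Summable.of_nonneg_of_le (fun n => Real.rpow_nonneg (norm_nonneg _) _)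
    (fun n => ?_) ((summable_of_mem u).mul_left (C ^ (2:ℝ≥0∞).toReal))
  have hC0 : 0 ≤ C := (norm_nonneg _).trans (hd 0)
  have h1 : ‖d n * u n‖ ≤ C * ‖u n‖ := by
    rw [norm_mul]; exact mul_le_mul_of_nonneg_right (hd n) (norm_nonneg _)
  calc ‖d n * u n‖ ^ (2:ℝ≥0∞).toReal ≤ (C * ‖u n‖) ^ (2:ℝ≥0∞).toReal :=
        Real.rpow_le_rpow (norm_nonneg _) h1 ht2.le
    _ = C ^ (2:ℝ≥0∞).toReal * ‖u n‖ ^ (2:ℝ≥0∞).toReal :=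
        Real.mul_rpow hC0 (norm_nonneg _)

noncomputable def shiftlp (k : ℤ) (u : H) : H := ⟨fun n => u (n + k), mem_shift u k⟩

noncomputable def mullp (d : ℤ → ℂ) {C : ℝ} (hd : ∀ n, ‖d n‖ ≤ C) (u : H) : H :=
  ⟨fun n => d n * u n, mem_mul d hd u⟩

lemma norm_shiftlp (k : ℤ) (u : H) : ‖shiftlp k u‖ = ‖u‖ := by
  rw [lp.norm_eq_tsum_rpow ht2, lp.norm_eq_tsum_rpow ht2]
  congr 1
  exact (Equiv.addRight k).tsum_eq (fun n : ℤ => ‖u n‖ ^ (2:ℝ≥0∞).toReal)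

lemma norm_mullp (d : ℤ → ℂ) {C : ℝ} (hd : ∀ n, ‖d n‖ ≤ C) (u : H) :
    ‖mullp d hd u‖ ≤ C * ‖u‖ := by
  have hC0 : 0 ≤ C := (norm_nonneg _).trans (hd 0)
  refine lp.norm_le_of_tsum_le ht2 (mul_nonneg hC0 (norm_nonneg _)) ?_
  have h1 : ∀ n : ℤ, ‖(mullp d hd u) n‖ ^ (2:ℝ≥0∞).toReal
      ≤ C ^ (2:ℝ≥0∞).toReal * ‖u n‖ ^ (2:ℝ≥0∞).toReal := by
    intro n
    have h1 : ‖d n * u n‖ ≤ C * ‖u n‖ := by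
      rw [norm_mul]; exact mul_le_mul_of_nonneg_right (hd n) (norm_nonneg _)
    calc ‖d n * u n‖ ^ (2:ℝ≥0∞).toReal ≤ (C * ‖u n‖) ^ (2:ℝ≥0∞).toReal :=
          Real.rpow_le_rpow (norm_nonneg _) h1 ht2.le
      _ = _ := Real.mul_rpow hC0 (norm_nonneg _)
  calc ∑' n : ℤ, ‖(mullp d hd u) n‖ ^ (2:ℝ≥0∞).toReal
      ≤ ∑' n : ℤ, C ^ (2:ℝ≥0∞).toReal * ‖u n‖ ^ (2:ℝ≥0∞).toReal := by
        refine Summable.tsum_le_tsum h1 ?_ ((summable_of_mem u).mul_left _)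
        exact Summable.of_nonneg_of_le (fun n => Real.rpow_nonneg (norm_nonneg _) _) h1
          ((summable_of_mem u).mul_left _)
    _ = C ^ (2:ℝ≥0∞).toReal * ∑' n : ℤ, ‖u n‖ ^ (2:ℝ≥0∞).toReal := tsum_mul_left
    _ = (C * ‖u‖) ^ (2:ℝ≥0∞).toReal := by
        rw [← lp.norm_rpow_eq_tsum ht2, Real.mul_rpow hC0 (norm_nonneg _)]

noncomputable def Jelem (d : ℤ → ℂ) {C : ℝ} (hd : ∀ n, ‖d n‖ ≤ C) (u : H) : H :=
  shiftlp (-1) u + mullp d hd u + shiftlp 1 u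

lemma Jelem_apply (d : ℤ → ℂ) {C : ℝ} (hd : ∀ n, ‖d n‖ ≤ C) (u : H) (n : ℤ) :
    (Jelem d hd u : ℤ → ℂ) n = Jact1 d (fun m => u m) n := by
  simp only [Jelem, lp.coeFn_add, Pi.add_apply, shiftlp, mullp, Jact1]
  rw [sub_eq_add_neg]

lemma norm_Jelem (d : ℤ → ℂ) {C : ℝ} (hd : ∀ n, ‖d n‖ ≤ C) (u : H) :
    ‖Jelem d hd u‖ ≤ (2 + C) * ‖u‖ := by
  calc ‖Jelem d hd u‖ ≤ ‖shiftlp (-1) u + mullp d hd u‖ + ‖shiftlp 1 u‖ := norm_add_le _ _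
    _ ≤ ‖shiftlp (-1) u‖ + ‖mullp d hd u‖ + ‖shiftlp 1 u‖ := by
        gcongr; exact norm_add_le _ _
    _ ≤ ‖u‖ + C * ‖u‖ + ‖u‖ := by
        rw [norm_shiftlp, norm_shiftlp]
        gcongr
        exact norm_mullp d hd u
    _ = (2 + C) * ‖u‖ := by ring


lemma Jelem_add (d : ℤ → ℂ) {C : ℝ} (hd : ∀ n, ‖d n‖ ≤ C) (u v : H) :
    Jelem d hd (u + v) = Jelem d hd u + Jelem d hd v := by
  apply lp.ext; funext n
  simp only [lp.coeFn_add, Pi.add_apply, Jelem_apply, Jact1]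
  ring

lemma Jelem_smul (d : ℤ → ℂ) {C : ℝ} (hd : ∀ n, ‖d n‖ ≤ C) (c : ℂ) (u : H) :
    Jelem d hd (c • u) = c • Jelem d hd u := by
  apply lp.ext; funext n
  simp only [lp.coeFn_smul, Pi.smul_apply, Jelem_apply, Jact1, smul_eq_mul]
  ring

noncomputable def Jclm (d : ℤ → ℂ) {C : ℝ} (hd : ∀ n, ‖d n‖ ≤ C) : H →L[ℂ] H :=
  LinearMap.mkContinuous
    { toFun := Jelem d hd
      map_add' := Jelem_add d hd
      map_smul' := Jelem_smul d hd }
    (2 + C) (norm_Jelem d hd)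

lemma Jclm_apply (d : ℤ → ℂ) {C : ℝ} (hd : ∀ n, ‖d n‖ ≤ C) (u : H) (n : ℤ) :
    (Jclm d hd u : ℤ → ℂ) n = Jact1 d (fun m => u m) n :=
  Jelem_apply d hd u n


lemma mem_numRange (d : ℤ → ℂ) {C : ℝ} (hd : ∀ n, ‖d n‖ ≤ C) (w : H) (hw : w ≠ 0) :
    ⟪w, Jclm d hd w⟫_ℂ * (⟪w, w⟫_ℂ)⁻¹ ∈ numRangeJ1 d := by
  have hnw : (‖w‖ : ℂ) ≠ 0 := by
    simpa using norm_ne_zero_iff.2 hw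
  set c : ℂ := ((‖w‖ : ℝ) : ℂ)⁻¹ with hc
  refine ⟨c • w, Jclm d hd (c • w), ?_, fun n => Jclm_apply d hd _ n, ?_⟩
  · rw [norm_smul]
    simp only [hc, norm_inv, Complex.norm_real, norm_norm]
    rw [inv_mul_cancel₀ (norm_ne_zero_iff.2 hw)]
  · rw [map_smul, inner_smul_left, inner_smul_right]
    have hcc : conj c = c := by
      simp [hc, ← Complex.ofReal_inv]
    rw [hcc]
    have hww : ⟪w, w⟫_ℂ = ((‖w‖ : ℂ)) ^ 2 := by
      simpa using inner_self_eq_norm_sq_to_K (𝕜 := ℂ) w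
    rw [hww, hc]
    rw [sq, mul_inv]
    ring

lemma Jclm_single (d : ℤ → ℂ) {C : ℝ} (hd : ∀ n, ‖d n‖ ≤ C) (n : ℤ) :
    Jclm d hd (lp.single 2 n (1:ℂ)) =
      lp.single 2 (n+1) (1:ℂ) + d n • lp.single 2 n (1:ℂ) + lp.single 2 (n-1) (1:ℂ) := by
  apply lp.ext; funext m
  rw [Jclm_apply]
  simp only [Jact1, lp.coeFn_add, Pi.add_apply, lp.coeFn_smul, Pi.smul_apply,
    lp.single_apply, Pi.single_apply, smul_eq_mul]
  split_ifs <;> simp_all <;> omega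

end Stmt14Aux

/-- If `Im(d n)` alternates between two distinct values `b₁` (even `n`) and
`b₂` (odd `n`), then `J` has no eigenvalue on the boundary of its numerical
range. -/
theorem stmt14 (d : ℤ → ℂ) (hd : ∃ C, ∀ n, ‖d n‖ ≤ C)
    (b₁ b₂ : ℝ) (hb : b₁ ≠ b₂)
    (halt : ∀ n : ℤ, (d n).im = if Even n then b₁ else b₂) :
    ¬ ∃ (lam : ℂ) (u : lp (fun _ : ℤ => ℂ) 2), u ≠ 0 ∧
        (∀ n, Jact1 d (fun m => u m) n = lam * u n) ∧
        lam ∈ frontier (numRangeJ1 d) := by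
  rintro ⟨lam, u₀, hu0, heig0, hfr⟩
  obtain ⟨C, hd⟩ := hd
  classical
  set T := Stmt14Aux.Jclm d hd with hT
  have hnu0 : ((‖u₀‖ : ℝ) : ℂ) ≠ 0 := by simpa using norm_ne_zero_iff.2 hu0
  set c : ℂ := ((‖u₀‖ : ℝ) : ℂ)⁻¹ with hc
  have hcne : c ≠ 0 := inv_ne_zero hnu0
  set u : Stmt14Aux.H := c • u₀ with hu_def
  have hu_ne : u ≠ 0 := smul_ne_zero hcne hu0
  have hu1 : ‖u‖ = 1 := by
    rw [hu_def, norm_smul]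
    simp only [hc, norm_inv, Complex.norm_real, norm_norm]
    rw [inv_mul_cancel₀ (norm_ne_zero_iff.2 hu0)]
  have heig : ∀ n, Jact1 d (fun m => u m) n = lam * u n := by
    intro n
    have h0 := heig0 n
    simp only [Jact1] at h0 ⊢
    simp only [hu_def, lp.coeFn_smul, Pi.smul_apply, smul_eq_mul]
    linear_combination c * h0
  have hTu : T u = lam • u := by
    apply lp.ext; funext n
    rw [hT, Stmt14Aux.Jclm_apply, heig n]
    simp [lp.coeFn_smul]
  set φ : Stmt14Aux.H →L[ℂ] ℂ :=
    (innerSL ℂ u).comp T - lam • innerSL ℂ u with hφdef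
  have hφ_apply : ∀ h, φ h = ⟪u, T h⟫_ℂ - lam * ⟪u, h⟫_ℂ := by
    intro h; simp [hφdef]
  by_cases hφ : φ = 0
  · -- degenerate case: Im(D) u = Im(lam) u, parity argument
    have key : ∀ n : ℤ, u n ≠ 0 → (d n).im = lam.im := by
      intro n hn
      have h1 : φ (lp.single 2 n (1:ℂ)) = 0 := by rw [hφ]; rfl
      rw [hφ_apply, hT, Stmt14Aux.Jclm_single d hd n] at h1
      rw [inner_add_right, inner_add_right, inner_smul_right,
        lp.inner_single_right, lp.inner_single_right, lp.inner_single_right] at h1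
      simp only [RCLike.inner_apply, map_one, mul_one] at h1
      have h2 := congrArg (starRingEnd ℂ) (heig n)
      simp only [Jact1, map_add, map_mul] at h2
      have hcn : (starRingEnd ℂ) (u n) ≠ 0 := by simpa using hn
      have h3 : (d n - (starRingEnd ℂ) (d n)) * (starRingEnd ℂ) (u n)
          = (lam - (starRingEnd ℂ) lam) * (starRingEnd ℂ) (u n) := by
        linear_combination h1 - h2
      have h4 := mul_right_cancel₀ hcn h3
      have h5 := congrArg Complex.im h4
      simp only [Complex.sub_im, Complex.conj_im] at h5
      linarith
    obtain ⟨n₀, hn₀⟩ : ∃ n, u n ≠ 0 := by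
      by_contra hA; push_neg at hA
      exact hu_ne (lp.ext (funext fun n => hA n))
    have him : (d n₀).im = lam.im := key n₀ hn₀
    have hz : ∀ n : ℤ, ¬ Even (n - n₀) → u n = 0 := by
      intro n hodd
      by_contra hA
      have h := key n hA
      have hne : (d n).im ≠ (d n₀).im := by
        rw [halt n, halt n₀]
        simp only [Int.even_iff] at hodd ⊢
        rcases eq_or_ne (n % 2) 0 with h' | h'
        · rw [if_pos h', if_neg (by omega)]; exact hb
        · rw [if_neg h', if_pos (by omega)]; exact hb.symm
      exact hne (h.trans him.symm)
    have hstep : ∀ k : ℤ, u (n₀ + 2*k + 2) = - u (n₀ + 2*k) := by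
      intro k
      have hzero : u (n₀ + 2*k + 1) = 0 := by
        refine hz _ ?_
        simp only [Int.even_iff]; omega
      have h := heig (n₀ + 2*k + 1)
      simp only [Jact1] at h
      have e1 : n₀ + 2*k + 1 - 1 = n₀ + 2*k := by ring
      have e2 : n₀ + 2*k + 1 + 1 = n₀ + 2*k + 2 := by ring
      rw [e1, e2, hzero] at h
      linear_combination h
    have hnorm : ∀ k : ℕ, ‖u (n₀ + 2*(k:ℤ))‖ = ‖u n₀‖ := by
      intro k
      induction k with
      | zero => simp
      | succ k ih =>
        have e : n₀ + 2*(((k:ℕ)+1:ℕ):ℤ) = n₀ + 2*(k:ℤ) + 2 := by push_cast; ring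
        rw [e, hstep (k:ℤ), norm_neg, ih]
    have hsum := Stmt14Aux.summable_of_mem u
    have hinj : Function.Injective (fun k : ℕ => n₀ + 2*(k:ℤ)) := by
      intro a b hab; simp only at hab; omega
    have hs2 := hsum.comp_injective hinj
    have hconst : ((fun n : ℤ => ‖u n‖ ^ (2:ℝ≥0∞).toReal) ∘ fun k : ℕ => n₀ + 2*(k:ℤ))
        = fun _ : ℕ => ‖u n₀‖ ^ (2:ℝ≥0∞).toReal :=
      funext fun k => by rw [Function.comp_apply, hnorm k]
    rw [hconst] at hs2
    have hlim := hs2.tendsto_atTop_zero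
    have h0 := tendsto_nhds_unique hlim tendsto_const_nhds
    exact (Real.rpow_pos_of_pos (norm_pos_iff.2 hn₀) _).ne' h0.symm
  · -- open mapping case
    have hQu : ⟪u, u⟫_ℂ = 1 := by
      have h := inner_self_eq_norm_sq_to_K (𝕜 := ℂ) u
      rw [hu1] at h; simpa using h
    have hBu : ⟪u, T u⟫_ℂ = lam := by rw [hTu, inner_smul_right, hQu, mul_one]
    have hid : HasStrictFDerivAt (fun w : Stmt14Aux.H => w)
        (ContinuousLinearMap.id ℝ Stmt14Aux.H) u := hasStrictFDerivAt_id u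
    have hTder : HasStrictFDerivAt (fun w : Stmt14Aux.H => T w)
        (T.restrictScalars ℝ) u := (T.restrictScalars ℝ).hasStrictFDerivAt
    have hB : HasStrictFDerivAt (fun w : Stmt14Aux.H => ⟪w, T w⟫_ℂ)
        ((fderivInnerCLM ℂ (u, T u)).comp
          ((ContinuousLinearMap.id ℝ Stmt14Aux.H).prod (T.restrictScalars ℝ))) u :=
      HasStrictFDerivAt.inner ℂ hid hTder
    have hQ : HasStrictFDerivAt (fun w : Stmt14Aux.H => ⟪w, w⟫_ℂ)
        ((fderivInnerCLM ℂ (u, u)).comp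
          ((ContinuousLinearMap.id ℝ Stmt14Aux.H).prod (ContinuousLinearMap.id ℝ Stmt14Aux.H))) u :=
      HasStrictFDerivAt.inner ℂ hid hid
    have hne1 : ⟪u, u⟫_ℂ ≠ 0 := by rw [hQu]; norm_num
    have hinv0 : HasStrictDerivAt Inv.inv (-((⟪u, u⟫_ℂ) ^ 2)⁻¹) (⟪u, u⟫_ℂ) :=
      hasStrictDerivAt_inv hne1
    have hinv := HasStrictFDerivAt.comp (f := fun w : Stmt14Aux.H => ⟪w, w⟫_ℂ) u (hinv0.hasStrictFDerivAt.restrictScalars ℝ) hQ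
    have hF := hB.mul hinv
    have key2 : ∀ D : Stmt14Aux.H →L[ℝ] ℂ,
        HasStrictFDerivAt (fun y : Stmt14Aux.H =>
          ⟪y, T y⟫_ℂ * ((fun w : Stmt14Aux.H => ⟪w, w⟫_ℂ) y)⁻¹) D u →
        (∀ h, D h = φ h) →
        HasStrictFDerivAt (fun w : Stmt14Aux.H => ⟪w, T w⟫_ℂ * (⟪w, w⟫_ℂ)⁻¹)
          (φ.restrictScalars ℝ) u := by
      intro D hFD hDh
      have hDeq : D = φ.restrictScalars ℝ := ContinuousLinearMap.ext hDh
      rwa [hDeq] at hFD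
    have hF' := key2 _ hF (fun h => by
      simp only [hφ_apply,
        ContinuousLinearMap.add_apply, ContinuousLinearMap.coe_smul', Pi.smul_apply,
        ContinuousLinearMap.comp_apply, ContinuousLinearMap.prod_apply,
        ContinuousLinearMap.coe_id', id_eq, fderivInnerCLM_apply,
        ContinuousLinearMap.coe_restrictScalars',
        ContinuousLinearMap.smulRight_apply, ContinuousLinearMap.one_apply,
        ContinuousLinearMap.toSpanSingleton_apply,
        smul_eq_mul, hQu, hBu, hTu, inner_smul_right]
      ring)
    obtain ⟨h₀, hh₀⟩ : ∃ h₀, φ h₀ ≠ 0 := by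
      by_contra hA; push_neg at hA
      exact hφ (ContinuousLinearMap.ext fun h => by simp [hA h])
    have hsurj : LinearMap.range (φ.restrictScalars ℝ : Stmt14Aux.H →ₗ[ℝ] ℂ) = ⊤ := by
      rw [LinearMap.range_eq_top]
      intro z
      refine ⟨(z / φ h₀) • h₀, ?_⟩
      show φ ((z / φ h₀) • h₀) = z
      rw [map_smul, smul_eq_mul, div_mul_cancel₀ _ hh₀]
    have hmap := hF'.map_nhds_eq_of_surj hsurj
    have hmem : numRangeJ1 d ∈
        Filter.map (fun w : Stmt14Aux.H => ⟪w, T w⟫_ℂ * (⟪w, w⟫_ℂ)⁻¹) (nhds u) := by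
      rw [Filter.mem_map]
      have hop : IsOpen {w : Stmt14Aux.H | w ≠ 0} := isOpen_ne
      refine Filter.mem_of_superset (hop.mem_nhds hu_ne) ?_
      intro w hw
      exact Stmt14Aux.mem_numRange d hd w hw
    rw [hmap] at hmem
    rw [hBu, hQu] at hmem
    simp only [inv_one, mul_one] at hmem
    have hint : lam ∈ interior (numRangeJ1 d) := mem_interior_iff_mem_nhds.2 hmem
    exact hfr.2 hint
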